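/- arXiv:quant-ph/0207161 — 3 statements merged into one kernel-verified Lean document; each statement's English description precedes it below -/
import Mathlib

section
/- The 4×4 Hermitian matrix ρ = (1/4)(I⊗I + Σᵢ₌₁³ tᵢ σᵢ⊗σᵢ) is positive semidefinite if and only if 1+t₁−t₂+t₃ ≥ 0, 1−t₁+t₂+t₃ ≥ 0, 1+t₁+t₂−t₃ ≥ 0, and 1−t₁−t₂−t₃ ≥ 0. -/
open Matrix Kronecker Complex BigOperators

noncomputable section

/-- Pauli matrices -/
def σ1 : Matrix (Fin 2) (Fin 2) ℂ := !![0, 1; 1, 0]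
def σ2 : Matrix (Fin 2) (Fin 2) ℂ := !![0, -Complex.I; Complex.I, 0]
def σ3 : Matrix (Fin 2) (Fin 2) ℂ := !![1, 0; 0, -1]

/-- Kronecker product of two 2×2 matrices as a 4×4 matrix in the
computational basis |00⟩,|01⟩,|10⟩,|11⟩. -/
def kron4 (A B : Matrix (Fin 2) (Fin 2) ℂ) : Matrix (Fin 4) (Fin 4) ℂ :=
  Matrix.reindex finProdFinEquiv finProdFinEquiv (A ⊗ₖ B)

/-- Bell-diagonal (Bell decomposable) state with correlation parameters t₁,t₂,t₃. -/
def ρBD (t1 t2 t3 : ℝ) : Matrix (Fin 4) (Fin 4) ℂ :=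
  (1/4 : ℂ) • ((1 : Matrix (Fin 4) (Fin 4) ℂ)
    + (t1 : ℂ) • kron4 σ1 σ1 + (t2 : ℂ) • kron4 σ2 σ2 + (t3 : ℂ) • kron4 σ3 σ3)

/-- rank-one projector |v⟩⟨v| on C⁴ -/
def proj4 (v : Fin 4 → ℂ) : Matrix (Fin 4) (Fin 4) ℂ := Matrix.vecMulVec v (star v)
def proj2 (v : Fin 2 → ℂ) : Matrix (Fin 2) (Fin 2) ℂ := Matrix.vecMulVec v (star v)

/-- The four Bell states -/
def bell : Fin 4 → (Fin 4 → ℂ)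
  | 0 => ![(Real.sqrt 2)⁻¹, 0, 0, (Real.sqrt 2)⁻¹]
  | 1 => ![(Real.sqrt 2)⁻¹, 0, 0, -(Real.sqrt 2)⁻¹]
  | 2 => ![0, (Real.sqrt 2)⁻¹, (Real.sqrt 2)⁻¹, 0]
  | 3 => ![0, (Real.sqrt 2)⁻¹, -(Real.sqrt 2)⁻¹, 0]

lemma kron4_eq (A B : Matrix (Fin 2) (Fin 2) ℂ) : kron4 A B =
  !![A 0 0*B 0 0, A 0 0*B 0 1, A 0 1*B 0 0, A 0 1*B 0 1;
     A 0 0*B 1 0, A 0 0*B 1 1, A 0 1*B 1 0, A 0 1*B 1 1;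
     A 1 0*B 0 0, A 1 0*B 0 1, A 1 1*B 0 0, A 1 1*B 0 1;
     A 1 0*B 1 0, A 1 0*B 1 1, A 1 1*B 1 0, A 1 1*B 1 1] := by
  ext i j; fin_cases i <;> fin_cases j <;> rfl

lemma k1 : kron4 σ1 σ1 = !![0,0,0,1; 0,0,1,0; 0,1,0,0; 1,0,0,0] := by
  rw [kron4_eq]; norm_num [σ1]
lemma k2 : kron4 σ2 σ2 = !![0,0,0,-1; 0,0,1,0; 0,1,0,0; -1,0,0,0] := by
  rw [kron4_eq]; norm_num [σ2, Complex.I_mul_I]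
lemma k3 : kron4 σ3 σ3 = !![1,0,0,0; 0,-1,0,0; 0,0,-1,0; 0,0,0,1] := by
  rw [kron4_eq]; norm_num [σ3]

lemma rho_eq (t1 t2 t3 : ℝ) : ρBD t1 t2 t3 =
  !![((1+t3)/4 : ℂ), 0, 0, (t1-t2)/4;
     0, (1-t3)/4, (t1+t2)/4, 0;
     0, (t1+t2)/4, (1-t3)/4, 0;
     (t1-t2)/4, 0, 0, (1+t3)/4] := by
  unfold ρBD
  rw [k1, k2, k3]
  ext i j
  fin_cases i <;> fin_cases j <;>
    simp [Matrix.one_apply, Matrix.vecHead, Matrix.vecTail] <;> ring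

lemma decomp (t1 t2 t3 : ℝ) : ρBD t1 t2 t3 =
    (((1+t1-t2+t3)/8 : ℝ) : ℂ) • proj4 ![1,0,0,1]
  + (((1-t1+t2+t3)/8 : ℝ) : ℂ) • proj4 ![1,0,0,-1]
  + (((1+t1+t2-t3)/8 : ℝ) : ℂ) • proj4 ![0,1,1,0]
  + (((1-t1-t2-t3)/8 : ℝ) : ℂ) • proj4 ![0,1,-1,0] := by
  rw [rho_eq]
  ext i j
  fin_cases i <;> fin_cases j <;>
    simp [proj4, Matrix.vecMulVec_apply, Matrix.vecHead, Matrix.vecTail,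
      -Matrix.cons_vecMulVec, -Matrix.vecMulVec_cons] <;>
    push_cast <;> ring

open scoped ComplexOrder in
lemma psd_smul_proj (r : ℝ) (hr : 0 ≤ r) (v : Fin 4 → ℂ) :
    ((r : ℂ) • proj4 v).PosSemidef := by
  refine Matrix.PosSemidef.of_dotProduct_mulVec_nonneg ?_ ?_
  · ext i j
    simp [proj4, Matrix.conjTranspose_apply, Matrix.vecMulVec_apply, mul_comm,
      Complex.conj_ofReal]
  · intro x
    have key : star x ⬝ᵥ (((r:ℂ) • proj4 v) *ᵥ x)
        = (r : ℂ) * (star (star v ⬝ᵥ x) * (star v ⬝ᵥ x)) := by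
      simp only [Matrix.smul_mulVec, dotProduct_smul, smul_eq_mul]
      congr 1
      rw [star_dotProduct]
      simp [proj4, Matrix.mulVec, Matrix.vecMulVec_apply, dotProduct, Finset.mul_sum,
        Finset.sum_mul]
      rw [Finset.sum_comm]
      apply Finset.sum_congr rfl; intro i _
      apply Finset.sum_congr rfl; intro j _
      ring
    rw [key]
    have h1 : (0:ℂ) ≤ (r:ℂ) := by exact_mod_cast Complex.zero_le_real.mpr hr
    exact mul_nonneg h1 (star_mul_self_nonneg _)


open scoped ComplexOrder in
/-- ρ = (1/4)(I⊗I + Σ tᵢσᵢ⊗σᵢ) is positive semidefinite iff the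
four tetrahedron inequalities hold. -/
theorem bd_posSemidef_iff (t1 t2 t3 : ℝ) :
    (ρBD t1 t2 t3).PosSemidef ↔
      0 ≤ 1 + t1 - t2 + t3 ∧ 0 ≤ 1 - t1 + t2 + t3 ∧
      0 ≤ 1 + t1 + t2 - t3 ∧ 0 ≤ 1 - t1 - t2 - t3 := by
  constructor
  · intro h
    have e1 := h.dotProduct_mulVec_nonneg ![1,0,0,1]
    have e2 := h.dotProduct_mulVec_nonneg ![1,0,0,-1]
    have e3 := h.dotProduct_mulVec_nonneg ![0,1,1,0]
    have e4 := h.dotProduct_mulVec_nonneg ![0,1,-1,0]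
    rw [rho_eq] at e1 e2 e3 e4
    simp [Matrix.mulVec, dotProduct, Fin.sum_univ_four, Matrix.vecHead, Matrix.vecTail] at e1 e2 e3 e4
    have g1 : (0:ℝ) ≤ (1 + t1 - t2 + t3)/2 := by
      rw [← Complex.zero_le_real]; push_cast; convert e1 using 1 <;> ring
    have g2 : (0:ℝ) ≤ (1 - t1 + t2 + t3)/2 := by
      rw [← Complex.zero_le_real]; push_cast; convert e2 using 1 <;> ring
    have g3 : (0:ℝ) ≤ (1 + t1 + t2 - t3)/2 := by
      rw [← Complex.zero_le_real]; push_cast; convert e3 using 1 <;> ring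
    have g4 : (0:ℝ) ≤ (1 - t1 - t2 - t3)/2 := by
      rw [← Complex.zero_le_real]; push_cast; convert e4 using 1 <;> ring
    exact ⟨by linarith, by linarith, by linarith, by linarith⟩
  · rintro ⟨h1, h2, h3, h4⟩
    rw [decomp]
    exact (((psd_smul_proj _ (by linarith) _).add
      (psd_smul_proj _ (by linarith) _)).add
      (psd_smul_proj _ (by linarith) _)).add
      (psd_smul_proj _ (by linarith) _)

end
end

section
/- For a Bell decomposable state in the singlet entangled tetrahedron (p₄ > 1/2), the concurrence equals C(ρ) = 2p₄ − 1 = −(1+t₁+t₂+t₃)/2, and hence the weight of the pure part in the Lewenstein–Sanpera decomposition satisfies 1−λ = C(ρ). -/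
open Matrix Kronecker Complex BigOperators

noncomputable section

/-- spin-flip matrix σ₂⊗σ₂ -/
def spinFlip : Matrix (Fin 4) (Fin 4) ℂ := kron4 σ2 σ2

/-- Wootters concurrence: max(0, μ₁−μ₂−μ₃−μ₄) where μᵢ are the decreasingly
ordered square roots of the eigenvalues of ρ(σ₂⊗σ₂)ρ̄(σ₂⊗σ₂). -/
def concurrence (ρ : Matrix (Fin 4) (Fin 4) ℂ) : ℝ :=
  let R := ρ * spinFlip * ρ.map (starRingEnd ℂ) * spinFlip
  let l := (R.charpoly.roots.map (fun z => Real.sqrt z.re)).sort (· ≤ ·)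
  max 0 (l.getD 3 0 - l.getD 2 0 - l.getD 1 0 - l.getD 0 0)

set_option maxHeartbeats 1000000

open Polynomial in
lemma BD_aux_spinFlip_eq : spinFlip = !![0,0,0,-1; 0,0,1,0; 0,1,0,0; -1,0,0,0] := by
  ext i j
  fin_cases i <;> fin_cases j <;>
    simp [spinFlip, kron4, σ2, finProdFinEquiv, Fin.divNat, Fin.modNat,
      Matrix.vecHead, Matrix.vecTail, Fin.ext_iff,
      show ((3:Fin 4):ℕ) = 3 from rfl, show ((2:Fin 4):ℕ) = 2 from rfl,
      show ((1:Fin 4):ℕ) = 1 from rfl]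

lemma BD_aux_rhoBD_eq (t1 t2 t3 : ℝ) : ρBD t1 t2 t3 =
    !![(1+(t3:ℂ))/4,0,0,((t1:ℂ)-t2)/4; 0,(1-(t3:ℂ))/4,((t1:ℂ)+t2)/4,0;
       0,((t1:ℂ)+t2)/4,(1-(t3:ℂ))/4,0; ((t1:ℂ)-t2)/4,0,0,(1+(t3:ℂ))/4] := by
  ext i j
  fin_cases i <;> fin_cases j <;>
    simp [ρBD, kron4, σ1, σ2, σ3, finProdFinEquiv, Fin.divNat, Fin.modNat,
      Matrix.vecHead, Matrix.vecTail, Fin.ext_iff, Matrix.one_apply,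
      show ((3:Fin 4):ℕ) = 3 from rfl, show ((2:Fin 4):ℕ) = 2 from rfl,
      show ((1:Fin 4):ℕ) = 1 from rfl] <;> ring

lemma BD_aux_Rcalc (a b c d : ℂ) :
    (!![a,0,0,b; 0,c,d,0; 0,d,c,0; b,0,0,a] * !![0,0,0,(-1:ℂ); 0,0,1,0; 0,1,0,0; -1,0,0,0]
      * !![a,0,0,b; 0,c,d,0; 0,d,c,0; b,0,0,a] * !![0,0,0,(-1:ℂ); 0,0,1,0; 0,1,0,0; -1,0,0,0])
    = !![a^2+b^2,0,0,2*a*b; 0,c^2+d^2,2*c*d,0; 0,2*c*d,c^2+d^2,0; 2*a*b,0,0,a^2+b^2] := by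
  ext i j
  fin_cases i <;> fin_cases j <;>
    simp [Matrix.mul_apply, Fin.sum_univ_four, Matrix.vecHead, Matrix.vecTail] <;> ring

open Polynomial in
lemma BD_aux_charpoly_calc (u v w x : ℂ) :
    (!![u,0,0,v; 0,w,x,0; 0,x,w,0; v,0,0,u]).charpoly
    = (X - C (u+v)) * (X - C (u-v)) * ((X - C (w+x)) * (X - C (w-x))) := by
  rw [Matrix.charpoly]
  have hc : charmatrix !![u,0,0,v; 0,w,x,0; 0,x,w,0; v,0,0,u]
      = !![X - C u,0,0,-C v; 0,X - C w,-C x,0; 0,-C x,X - C w,0; -C v,0,0,X - C u] := by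
    ext i j
    fin_cases i <;> fin_cases j <;>
      simp [charmatrix_apply, Matrix.one_apply]
  rw [hc]
  simp [Matrix.det_succ_row_zero, Fin.sum_univ_succ, Matrix.det_fin_three,
    Matrix.vecHead, Matrix.vecTail, Fin.castSucc, Fin.castAdd, Fin.castLE, Fin.succAbove]
  ring

open Polynomial in
lemma BD_aux_roots4 (a b c d : ℂ) :
    ((X - C a) * (X - C b) * ((X - C c) * (X - C d))).roots = {a, b, c, d} := by
  have h0 : ∀ z : ℂ, (X - C z) ≠ 0 := fun z => X_sub_C_ne_zero z
  rw [Polynomial.roots_mul (mul_ne_zero (mul_ne_zero (h0 a) (h0 b)) (mul_ne_zero (h0 c) (h0 d))),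
    Polynomial.roots_mul (mul_ne_zero (h0 a) (h0 b)),
    Polynomial.roots_mul (mul_ne_zero (h0 c) (h0 d)), roots_X_sub_C, roots_X_sub_C,
    roots_X_sub_C, roots_X_sub_C]
  rfl

lemma BD_aux_sort4_aux (a b c d : ℝ) (ha : a ≤ d) (hb : b ≤ d) (hc : c ≤ d)
    (l : List ℝ) (hsorted : l.Pairwise (· ≤ ·)) (hperm : (l : Multiset ℝ) = {a, b, c, d}) :
    l.getD 3 0 - l.getD 2 0 - l.getD 1 0 - l.getD 0 0 = d - a - b - c := by
  have hlen : l.length = 4 := by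
    have := congrArg Multiset.card hperm
    simpa using this
  match l, hlen, hsorted, hperm with
  | [x0, x1, x2, x3], _, hsorted, hperm =>
  have hm : ({x0, x1, x2, x3} : Multiset ℝ) = {a, b, c, d} := hperm
  have hd : d ∈ ({x0, x1, x2, x3} : Multiset ℝ) := by rw [hm]; simp
  have hx3m : x3 ∈ ({a, b, c, d} : Multiset ℝ) := by rw [← hm]; simp
  have h01 : (x0 ≤ x1 ∧ x0 ≤ x2 ∧ x0 ≤ x3) ∧ (x1 ≤ x2 ∧ x1 ≤ x3) ∧ x2 ≤ x3 := by
    simpa [List.pairwise_cons] using hsorted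
  obtain ⟨⟨h1, h2, h3⟩, ⟨h4, h5⟩, h6⟩ := h01
  have hx3d : x3 = d := by
    have hA : d ≤ x3 := by
      simp only [Multiset.insert_eq_cons, Multiset.mem_cons, Multiset.mem_singleton] at hd
      rcases hd with h | h | h | h <;> linarith
    have hB : x3 ≤ d := by
      simp only [Multiset.insert_eq_cons, Multiset.mem_cons, Multiset.mem_singleton] at hx3m
      rcases hx3m with h | h | h | h <;> linarith
    linarith
  have hsum : x0 + x1 + x2 + x3 = a + b + c + d := by
    have := congrArg Multiset.sum hperm
    simp [Multiset.sum_cons] at this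
    linarith
  simp [List.getD]
  linarith

lemma BD_aux_sort4 (a b c d : ℝ) (ha : a ≤ d) (hb : b ≤ d) (hc : c ≤ d) :
    (Multiset.sort ({a, b, c, d} : Multiset ℝ) (· ≤ ·)).getD 3 0 -
      (Multiset.sort ({a, b, c, d} : Multiset ℝ) (· ≤ ·)).getD 2 0 -
      (Multiset.sort ({a, b, c, d} : Multiset ℝ) (· ≤ ·)).getD 1 0 -
      (Multiset.sort ({a, b, c, d} : Multiset ℝ) (· ≤ ·)).getD 0 0
    = d - a - b - c :=
  BD_aux_sort4_aux a b c d ha hb hc _ (Multiset.pairwise_sort _ _) (Multiset.sort_eq _ _)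

/-- for a Bell decomposable state in the singlet tetrahedron
(p₄ > 1/2) the concurrence equals 2p₄−1 = −(1+t₁+t₂+t₃)/2, hence the weight of
the pure part in the L-S decomposition satisfies 1−λ = C(ρ). -/
theorem bd_concurrence
    (p1 p2 p3 p4 : ℝ) (hp1 : 0 ≤ p1) (hp2 : 0 ≤ p2) (hp3 : 0 ≤ p3) (hp4 : 0 ≤ p4)
    (hsum : p1 + p2 + p3 + p4 = 1) (h4 : 1/2 < p4)
    (t1 t2 t3 : ℝ)
    (ht1 : t1 = p1 - p2 + p3 - p4) (ht2 : t2 = -p1 + p2 + p3 - p4)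
    (ht3 : t3 = p1 + p2 - p3 - p4) :
    concurrence (ρBD t1 t2 t3) = 2 * p4 - 1 ∧
    2 * p4 - 1 = -(1 + t1 + t2 + t3)/2 ∧
    1 - (3 + t1 + t2 + t3)/2 = concurrence (ρBD t1 t2 t3) := by
  have hs : (p1:ℂ) + p2 + p3 + p4 = 1 := by exact_mod_cast congrArg (Complex.ofReal) hsum
  have hrho : ρBD t1 t2 t3 =
      !![(((p1+p2)/2 : ℝ) : ℂ),0,0,(((p1-p2)/2 : ℝ) : ℂ);
         0,(((p3+p4)/2 : ℝ) : ℂ),(((p3-p4)/2 : ℝ) : ℂ),0;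
         0,(((p3-p4)/2 : ℝ) : ℂ),(((p3+p4)/2 : ℝ) : ℂ),0;
         (((p1-p2)/2 : ℝ) : ℂ),0,0,(((p1+p2)/2 : ℝ) : ℂ)] := by
    rw [BD_aux_rhoBD_eq]
    subst ht1 ht2 ht3
    ext i j
    fin_cases i <;> fin_cases j <;>
      simp [Matrix.vecHead, Matrix.vecTail] <;>
      push_cast <;>
      first
        | rfl
        | linear_combination hs / 4
        | linear_combination (-hs) / 4
        | ring
  have hconj : (ρBD t1 t2 t3).map (starRingEnd ℂ) = ρBD t1 t2 t3 := by
    rw [hrho]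
    ext i j
    fin_cases i <;> fin_cases j <;>
      simp [Matrix.map_apply, Complex.conj_ofReal, map_ofNat]
  have hC : concurrence (ρBD t1 t2 t3) = 2 * p4 - 1 := by
    have hle1 : p1 ≤ p4 := by linarith
    have hle2 : p2 ≤ p4 := by linarith
    have hle3 : p3 ≤ p4 := by linarith
    simp only [concurrence]
    rw [hconj, hrho, BD_aux_spinFlip_eq, BD_aux_Rcalc, BD_aux_charpoly_calc]
    have e1 : (((p1+p2)/2 : ℝ) : ℂ)^2 + (((p1-p2)/2 : ℝ) : ℂ)^2
        + 2 * (((p1+p2)/2 : ℝ) : ℂ) * (((p1-p2)/2 : ℝ) : ℂ) = ((p1^2 : ℝ) : ℂ) := by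
      push_cast; ring
    have e2 : (((p1+p2)/2 : ℝ) : ℂ)^2 + (((p1-p2)/2 : ℝ) : ℂ)^2
        - 2 * (((p1+p2)/2 : ℝ) : ℂ) * (((p1-p2)/2 : ℝ) : ℂ) = ((p2^2 : ℝ) : ℂ) := by
      push_cast; ring
    have e3 : (((p3+p4)/2 : ℝ) : ℂ)^2 + (((p3-p4)/2 : ℝ) : ℂ)^2
        + 2 * (((p3+p4)/2 : ℝ) : ℂ) * (((p3-p4)/2 : ℝ) : ℂ) = ((p3^2 : ℝ) : ℂ) := by
      push_cast; ring
    have e4 : (((p3+p4)/2 : ℝ) : ℂ)^2 + (((p3-p4)/2 : ℝ) : ℂ)^2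
        - 2 * (((p3+p4)/2 : ℝ) : ℂ) * (((p3-p4)/2 : ℝ) : ℂ) = ((p4^2 : ℝ) : ℂ) := by
      push_cast; ring
    rw [e1, e2, e3, e4, BD_aux_roots4]
    have hmap : (({((p1^2 : ℝ) : ℂ), ((p2^2 : ℝ) : ℂ), ((p3^2 : ℝ) : ℂ), ((p4^2 : ℝ) : ℂ)} :
        Multiset ℂ).map (fun z => Real.sqrt z.re)) = {p1, p2, p3, p4} := by
      have hre : ∀ r : ℝ, (((r:ℂ))^2).re = r^2 := fun r => by
        rw [← Complex.ofReal_pow, Complex.ofReal_re]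
      simp [Multiset.insert_eq_cons, hre, Real.sqrt_sq hp1, Real.sqrt_sq hp2,
        Real.sqrt_sq hp3, Real.sqrt_sq hp4]
    rw [hmap]
    rw [show ((Multiset.sort ({p1, p2, p3, p4} : Multiset ℝ) (· ≤ ·)).getD 3 0 -
      (Multiset.sort ({p1, p2, p3, p4} : Multiset ℝ) (· ≤ ·)).getD 2 0 -
      (Multiset.sort ({p1, p2, p3, p4} : Multiset ℝ) (· ≤ ·)).getD 1 0 -
      (Multiset.sort ({p1, p2, p3, p4} : Multiset ℝ) (· ≤ ·)).getD 0 0)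
      = p4 - p1 - p2 - p3 from BD_aux_sort4 p1 p2 p3 p4 hle1 hle2 hle3]
    rw [max_eq_right (by linarith)]
    linarith
  refine ⟨hC, by rw [ht1, ht2, ht3]; ring_nf; linarith, ?_⟩
  rw [hC, ht1, ht2, ht3]; ring_nf; linarith

end
end

section
/- Under an invertible local transformation ρ' = (A⊗B)ρ(A⊗B)†/tr((A⊗B)ρ(A⊗B)†) with A = μ(I+a m·σ), B = ν(I+b n·σ), 0 ≤ a,b < 1, unit vectors m,n, the concurrence transforms as C(ρ') = μ²ν²(1−a²)(1−b²)·C(ρ)/tr((A⊗B)ρ(A⊗B)†). -/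
open Matrix Kronecker Complex BigOperators

noncomputable section

/-- filtration operator μ(I + a m·σ) -/
def filt (μ a : ℝ) (m : Fin 3 → ℝ) : Matrix (Fin 2) (Fin 2) ℂ :=
  (μ : ℂ) • ((1 : Matrix (Fin 2) (Fin 2) ℂ)
    + (a : ℂ) • ((m 0 : ℂ) • σ1 + (m 1 : ℂ) • σ2 + (m 2 : ℂ) • σ3))

/-! ### Auxiliary lemmas -/

open Polynomial in
lemma eval_charpoly' (M : Matrix (Fin 4) (Fin 4) ℂ) (z : ℂ) :
    M.charpoly.eval z = (z • (1 : Matrix (Fin 4) (Fin 4) ℂ) - M).det := by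
  rw [Matrix.charpoly, ← coe_evalRingHom, RingHom.map_det]
  congr 1
  ext i j
  by_cases h : i = j <;>
    simp [h, Matrix.charmatrix_apply, Matrix.diagonal_apply, Matrix.one_apply]

open Polynomial in
lemma roots_scale (R M : Matrix (Fin 4) (Fin 4) ℂ) (hM : IsUnit M.det) (c : ℂ) (hc : c ≠ 0) :
    ((c • (M * R * M⁻¹)).charpoly).roots = R.charpoly.roots.map (fun z => c * z) := by
  have hmonic := R.charpoly_monic
  have hsplit : R.charpoly = (R.charpoly.roots.map fun a => X - C a).prod :=
    ((IsAlgClosed.splits _).eq_prod_roots_of_monic hmonic)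
  have hcard : R.charpoly.roots.card = 4 := by
    have h1 : R.charpoly.natDegree = 4 := by
      simpa using R.charpoly_natDegree_eq_dim
    have := (IsAlgClosed.splits R.charpoly).natDegree_eq_card_roots
    rwa [h1, eq_comm] at this
  have key : (c • (M * R * M⁻¹)).charpoly
      = ((R.charpoly.roots.map fun z => c * z).map fun a => X - C a).prod := by
    apply Polynomial.funext
    intro z
    rw [eval_charpoly']
    have h1 : z • (1 : Matrix (Fin 4) (Fin 4) ℂ) - c • (M * R * M⁻¹)
        = M * (z • (1 : Matrix (Fin 4) (Fin 4) ℂ) - c • R) * M⁻¹ := by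
      have e1 : M * (z • (1 : Matrix (Fin 4) (Fin 4) ℂ)) * M⁻¹ = z • 1 := by
        rw [Matrix.mul_smul, Matrix.mul_one, Matrix.smul_mul, Matrix.mul_nonsing_inv _ hM]
      have e2 : M * (c • R) * M⁻¹ = c • (M * R * M⁻¹) := by
        rw [Matrix.mul_smul, Matrix.smul_mul]
      rw [Matrix.mul_sub, Matrix.sub_mul, e1, e2]
    rw [h1, Matrix.det_mul, Matrix.det_mul, mul_comm (M.det), mul_assoc,
      ← Matrix.det_mul, Matrix.mul_nonsing_inv _ hM, Matrix.det_one, mul_one]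
    have h2 : z • (1 : Matrix (Fin 4) (Fin 4) ℂ) - c • R
        = c • ((c⁻¹ * z) • (1 : Matrix (Fin 4) (Fin 4) ℂ) - R) := by
      rw [smul_sub, smul_smul, ← mul_assoc, mul_inv_cancel₀ hc, one_mul]
    rw [h2, Matrix.det_smul, ← eval_charpoly', Fintype.card_fin]
    conv_lhs => rw [hsplit]
    rw [Multiset.map_map, eval_multiset_prod, Multiset.map_map,
        eval_multiset_prod, Multiset.map_map]
    simp only [Function.comp, eval_sub, eval_X, eval_C]
    have : (R.charpoly.roots.map fun x => z - c * x)
        = R.charpoly.roots.map fun x => c * (c⁻¹ * z - x) := by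
      apply Multiset.map_congr rfl
      intro x _
      field_simp
    rw [this, Multiset.prod_map_mul (f := fun _ => c) (g := fun x => c⁻¹ * z - x)]
    rw [Multiset.map_const', hcard, Multiset.prod_replicate]
  rw [key, Polynomial.roots_multiset_prod_X_sub_C]

lemma concurrence_eq (ρ : Matrix (Fin 4) (Fin 4) ℂ) :
    concurrence ρ =
      max 0 ((((ρ * spinFlip * ρ.map (starRingEnd ℂ) * spinFlip).charpoly.roots.map
          (fun z => Real.sqrt z.re)).sort (· ≤ ·)).getD 3 0
        - (((ρ * spinFlip * ρ.map (starRingEnd ℂ) * spinFlip).charpoly.roots.map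
          (fun z => Real.sqrt z.re)).sort (· ≤ ·)).getD 2 0
        - (((ρ * spinFlip * ρ.map (starRingEnd ℂ) * spinFlip).charpoly.roots.map
          (fun z => Real.sqrt z.re)).sort (· ≤ ·)).getD 1 0
        - (((ρ * spinFlip * ρ.map (starRingEnd ℂ) * spinFlip).charpoly.roots.map
          (fun z => Real.sqrt z.re)).sort (· ≤ ·)).getD 0 0) := rfl

lemma concurrence_scale (ρ ρ' M : Matrix (Fin 4) (Fin 4) ℂ) (hM : IsUnit M.det)
    (k : ℝ) (hk : 0 < k)
    (hR : ρ' * spinFlip * ρ'.map (starRingEnd ℂ) * spinFlip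
        = ((k : ℂ))^2 • (M * (ρ * spinFlip * ρ.map (starRingEnd ℂ) * spinFlip) * M⁻¹)) :
    concurrence ρ' = k * concurrence ρ := by
  rw [concurrence_eq, concurrence_eq, hR,
    roots_scale _ _ hM _ (pow_ne_zero 2 (Complex.ofReal_ne_zero.mpr hk.ne'))]
  set s := (ρ * spinFlip * ρ.map (starRingEnd ℂ) * spinFlip).charpoly.roots with hs
  have hmap : (s.map fun z => ((k : ℂ))^2 * z).map (fun z => Real.sqrt z.re)
      = (s.map fun z => Real.sqrt z.re).map (fun x => k * x) := by
    rw [Multiset.map_map, Multiset.map_map]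
    apply Multiset.map_congr rfl
    intro z _
    show Real.sqrt ((((k : ℂ))^2 * z).re) = k * Real.sqrt z.re
    have h1 : (((k : ℂ))^2 * z).re = k^2 * z.re := by
      simp [Complex.mul_re, ← Complex.ofReal_pow]
    rw [h1, Real.sqrt_mul (sq_nonneg k), Real.sqrt_sq hk.le]
  rw [hmap]
  have hsort : ((s.map fun z => Real.sqrt z.re).map (fun x => k * x)).sort (· ≤ ·)
      = (((s.map fun z => Real.sqrt z.re)).sort (· ≤ ·)).map (fun x => k * x) := by
    rw [← Multiset.map_sort (r := (· ≤ ·)) (r' := (· ≤ ·))]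
    intro x _ y _
    exact (mul_le_mul_iff_right₀ hk).symm
  rw [hsort]
  set l := ((s.map fun z => Real.sqrt z.re)).sort (· ≤ ·) with hl
  have hg : ∀ i, (l.map fun x => k * x).getD i 0 = k * l.getD i 0 := by
    intro i
    rcases lt_or_ge i l.length with h | h
    · rw [List.getD_eq_getElem _ _ (by simpa using h), List.getD_eq_getElem _ _ h,
        List.getElem_map]
    · rw [List.getD_eq_default _ _ (by simpa using h), List.getD_eq_default _ _ h, mul_zero]
  rw [hg, hg, hg, hg, mul_max_of_nonneg _ _ hk.le, mul_zero]
  ring_nf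


lemma key2 (X : Matrix (Fin 2) (Fin 2) ℂ) : Xᵀ * σ2 * X = X.det • σ2 := by
  ext i j
  fin_cases i <;> fin_cases j <;>
    simp [Matrix.mul_apply, Fin.sum_univ_two, σ2, Matrix.det_fin_two] <;> ring

lemma kron4_mul (A B C D : Matrix (Fin 2) (Fin 2) ℂ) :
    kron4 A B * kron4 C D = kron4 (A * C) (B * D) := by
  simp only [kron4, Matrix.reindex_apply]
  rw [Matrix.submatrix_mul_equiv, Matrix.mul_kronecker_mul]

lemma kron4_transpose (A B : Matrix (Fin 2) (Fin 2) ℂ) : (kron4 A B)ᵀ = kron4 Aᵀ Bᵀ := by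
  simp only [kron4, Matrix.reindex_apply, Matrix.transpose_submatrix]
  congr 1

lemma kron4_map_conj (A B : Matrix (Fin 2) (Fin 2) ℂ) :
    (kron4 A B).map (starRingEnd ℂ) = kron4 (A.map (starRingEnd ℂ)) (B.map (starRingEnd ℂ)) := by
  simp only [kron4, Matrix.reindex_apply, Matrix.submatrix_map]
  congr 1
  ext ⟨i,j⟩ ⟨k,l⟩
  simp [Matrix.kroneckerMap_apply]

lemma kron4_smul_left (c : ℂ) (A B : Matrix (Fin 2) (Fin 2) ℂ) :
    kron4 (c • A) B = c • kron4 A B := by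
  simp only [kron4, Matrix.reindex_apply]
  ext i j
  simp [Matrix.kroneckerMap_apply, mul_assoc]

lemma kron4_smul_right (c : ℂ) (A B : Matrix (Fin 2) (Fin 2) ℂ) :
    kron4 A (c • B) = c • kron4 A B := by
  simp only [kron4, Matrix.reindex_apply]
  ext i j
  simp [Matrix.kroneckerMap_apply]
  ring

lemma kron4_det (A B : Matrix (Fin 2) (Fin 2) ℂ) :
    (kron4 A B).det = A.det ^ 2 * B.det ^ 2 := by
  simp [kron4, Matrix.det_reindex_self, Matrix.det_kronecker]

lemma kron4_conjTranspose (A B : Matrix (Fin 2) (Fin 2) ℂ) :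
    (kron4 A B)ᴴ = kron4 Aᴴ Bᴴ := by
  ext i j
  rw [Matrix.conjTranspose_apply]
  have h := congrFun (congrFun (kron4_map_conj A B) j) i
  have ht := congrFun (congrFun (kron4_transpose (A.map (starRingEnd ℂ)) (B.map (starRingEnd ℂ))) i) j
  simp only [Matrix.map_apply] at h
  rw [show (star ((kron4 A B) j i) : ℂ) = starRingEnd ℂ ((kron4 A B) j i) from rfl, h,
    ← Matrix.transpose_apply (kron4 (A.map (starRingEnd ℂ)) (B.map (starRingEnd ℂ))) i j, ht]
  congr 1 <;> ext p q <;> simp [Matrix.conjTranspose_apply]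

lemma conjTranspose_map_conj (M : Matrix (Fin 4) (Fin 4) ℂ) :
    (Mᴴ).map (starRingEnd ℂ) = Mᵀ := by
  ext i j
  simp [Matrix.conjTranspose_apply]

lemma key2' (X : Matrix (Fin 2) (Fin 2) ℂ) :
    Xᴴ * σ2 * X.map (starRingEnd ℂ) = (starRingEnd ℂ X.det) • σ2 := by
  have h := key2 (X.map (starRingEnd ℂ))
  have h1 : (X.map (starRingEnd ℂ))ᵀ = Xᴴ := by
    ext i j; simp [Matrix.conjTranspose_apply]
  have h2 : (X.map (starRingEnd ℂ)).det = starRingEnd ℂ X.det := by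
    rw [show X.map (starRingEnd ℂ) = (starRingEnd ℂ).mapMatrix X from rfl, ← RingHom.map_det]
  rwa [h1, h2] at h

-- combined conjugation identities at kron4 level
lemma MH_F_Mbar (A B : Matrix (Fin 2) (Fin 2) ℂ) (dA dB : ℝ)
    (hA : A.det = (dA : ℂ)) (hB : B.det = (dB : ℂ)) :
    (kron4 A B)ᴴ * spinFlip * (kron4 A B).map (starRingEnd ℂ)
      = ((dA * dB : ℝ) : ℂ) • spinFlip := by
  rw [kron4_conjTranspose, kron4_map_conj, spinFlip, kron4_mul, kron4_mul, key2', key2',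
    hA, hB]
  simp only [Complex.conj_ofReal, kron4_smul_left, kron4_smul_right, smul_smul]
  push_cast
  rw [mul_comm]

lemma MT_F_M (A B : Matrix (Fin 2) (Fin 2) ℂ) (dA dB : ℝ)
    (hA : A.det = (dA : ℂ)) (hB : B.det = (dB : ℂ)) :
    (kron4 A B)ᵀ * spinFlip * kron4 A B = ((dA * dB : ℝ) : ℂ) • spinFlip := by
  rw [kron4_transpose, spinFlip, kron4_mul, kron4_mul, key2, key2, hA, hB]
  simp only [kron4_smul_left, kron4_smul_right, smul_smul]
  push_cast
  rw [mul_comm]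

lemma filt_entries (μ a : ℝ) (m : Fin 3 → ℝ) :
    filt μ a m = !![(μ:ℂ) * (1 + a * m 2), (μ:ℂ) * (a * m 0 - a * m 1 * Complex.I);
                    (μ:ℂ) * (a * m 0 + a * m 1 * Complex.I), (μ:ℂ) * (1 - a * m 2)] := by
  ext i j
  fin_cases i <;> fin_cases j <;>
    (simp [filt, σ1, σ2, σ3, Matrix.one_apply]; try ring) <;> tauto

lemma filt_det (μ a : ℝ) (m : Fin 3 → ℝ) (hm : (m 0)^2 + (m 1)^2 + (m 2)^2 = 1) :
    (filt μ a m).det = ((μ^2 * (1 - a^2) : ℝ) : ℂ) := by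
  have hmc : ((m 0 : ℂ))^2 + ((m 1 : ℂ))^2 + ((m 2 : ℂ))^2 = 1 := by
    exact_mod_cast congrArg (fun x : ℝ => (x : ℂ)) hm
  rw [filt_entries, Matrix.det_fin_two_of]
  push_cast
  linear_combination (-(μ:ℂ)^2 * (a:ℂ)^2) * hmc + ((μ:ℂ)^2*(a:ℂ)^2*((m 1 : ℂ))^2) * Complex.I_sq

lemma mapRealSmul (r : ℝ) (X : Matrix (Fin 4) (Fin 4) ℂ) :
    (((r : ℂ)) • X).map (starRingEnd ℂ) = ((r : ℂ)) • X.map (starRingEnd ℂ) := by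
  ext i j
  simp


open scoped ComplexOrder in
/-- under the invertible local transformation
ρ' = (A⊗B)ρ(A⊗B)†/tr((A⊗B)ρ(A⊗B)†) with A = μ(I+a m·σ), B = ν(I+b n·σ),
0 ≤ a,b < 1, unit vectors m,n, the concurrence transforms as
C(ρ') = μ²ν²(1−a²)(1−b²)·C(ρ)/tr((A⊗B)ρ(A⊗B)†). -/
theorem concurrence_lqcc
    (ρ : Matrix (Fin 4) (Fin 4) ℂ) (hρ : ρ.PosSemidef) (htr : ρ.trace = 1)
    (μ ν a b : ℝ) (hμ : 0 < μ) (hν : 0 < ν)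
    (ha0 : 0 ≤ a) (ha1 : a < 1) (hb0 : 0 ≤ b) (hb1 : b < 1)
    (m n : Fin 3 → ℝ)
    (hm : (m 0)^2 + (m 1)^2 + (m 2)^2 = 1) (hn : (n 0)^2 + (n 1)^2 + (n 2)^2 = 1)
    (N : ℝ) (hNpos : 0 < N)
    (hN : (kron4 (filt μ a m) (filt ν b n) * ρ * (kron4 (filt μ a m) (filt ν b n))ᴴ).trace
            = (N : ℂ)) :
    concurrence (((N⁻¹ : ℝ) : ℂ) •
        (kron4 (filt μ a m) (filt ν b n) * ρ * (kron4 (filt μ a m) (filt ν b n))ᴴ))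
      = μ^2 * ν^2 * (1 - a^2) * (1 - b^2) * concurrence ρ / N := by
  have hdetA : (filt μ a m).det = ((μ^2 * (1-a^2) : ℝ) : ℂ) := filt_det μ a m hm
  have hdetB : (filt ν b n).det = ((ν^2 * (1-b^2) : ℝ) : ℂ) := filt_det ν b n hn
  set A := filt μ a m with hA
  set B := filt ν b n with hB
  set M := kron4 A B with hM
  set dA : ℝ := μ^2 * (1 - a^2) with hdA
  set dB : ℝ := ν^2 * (1 - b^2) with hdB
  have hdApos : 0 < dA := by
    rw [hdA]; exact mul_pos (pow_pos hμ 2) (by nlinarith)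
  have hdBpos : 0 < dB := by
    rw [hdB]; exact mul_pos (pow_pos hν 2) (by nlinarith)
  have hMdet : M.det = ((dA^2 * dB^2 : ℝ) : ℂ) := by
    rw [hM, kron4_det, hdetA, hdetB]; push_cast; ring
  have hMunit : IsUnit M.det := by
    rw [hMdet]
    refine isUnit_iff_ne_zero.mpr ?_
    exact_mod_cast (by positivity : (dA^2*dB^2 : ℝ) ≠ 0)
  have hC1 := MH_F_Mbar A B dA dB hdetA hdetB
  have hC2 := MT_F_M A B dA dB hdetA hdetB
  rw [← hM] at hC1 hC2
  have hMTF : Mᵀ * spinFlip = ((dA*dB : ℝ) : ℂ) • (spinFlip * M⁻¹) := by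
    have h := congrArg (fun X => X * M⁻¹) hC2
    rwa [Matrix.mul_assoc (Mᵀ * spinFlip), Matrix.mul_nonsing_inv _ hMunit, Matrix.mul_one,
      Matrix.smul_mul] at h
  set e : ℂ := ((dA*dB : ℝ) : ℂ) with he
  have main : (M * ρ * Mᴴ) * spinFlip * ((M * ρ * Mᴴ).map (starRingEnd ℂ)) * spinFlip
      = e^2 • (M * (ρ * spinFlip * ρ.map (starRingEnd ℂ) * spinFlip) * M⁻¹) := by
    have hmapM : (M * ρ * Mᴴ).map (starRingEnd ℂ)
        = M.map (starRingEnd ℂ) * ρ.map (starRingEnd ℂ) * Mᵀ := by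
      rw [Matrix.map_mul, Matrix.map_mul, conjTranspose_map_conj]
    rw [hmapM]
    calc (M * ρ * Mᴴ) * spinFlip * (M.map (starRingEnd ℂ) * ρ.map (starRingEnd ℂ) * Mᵀ) * spinFlip
        = (M * ρ) * (Mᴴ * spinFlip * M.map (starRingEnd ℂ)) * (ρ.map (starRingEnd ℂ))
            * (Mᵀ * spinFlip) := by
          simp only [Matrix.mul_assoc]
      _ = (M * ρ) * (e • spinFlip) * (ρ.map (starRingEnd ℂ)) * (e • (spinFlip * M⁻¹)) := by
          rw [hC1, hMTF]
      _ = e^2 • (M * (ρ * spinFlip * ρ.map (starRingEnd ℂ) * spinFlip) * M⁻¹) := by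
          simp only [Matrix.mul_smul, Matrix.smul_mul, smul_smul, Matrix.mul_assoc, sq]
  have hk : (0:ℝ) < N⁻¹ * (dA * dB) := by positivity
  have hRfinal : (((N⁻¹ : ℝ) : ℂ) • (M * ρ * Mᴴ)) * spinFlip
      * ((((N⁻¹ : ℝ) : ℂ) • (M * ρ * Mᴴ)).map (starRingEnd ℂ)) * spinFlip
      = (((N⁻¹ * (dA*dB) : ℝ) : ℂ))^2
        • (M * (ρ * spinFlip * ρ.map (starRingEnd ℂ) * spinFlip) * M⁻¹) := by
    rw [mapRealSmul]
    simp only [Matrix.smul_mul, Matrix.mul_smul, smul_smul]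
    rw [main, smul_smul, he]
    congr 1
    push_cast
    ring
  have hfin := concurrence_scale ρ _ M hMunit (N⁻¹ * (dA*dB)) hk hRfinal
  rw [hfin, hdA, hdB, div_eq_mul_inv]
  ring

end
end
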